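/- If S_{nmij} = C(x)(h_{nj} h_{mi} - h_{ni} h_{mj}) with C = 1 - H², and 𝒟_i h_{mn} = -(2/H) H_i h_{mn}, and 𝒟_i is a derivation commuting with raising indices via a 𝒟-parallel metric tensor, then 𝒟_i S_n{}^k{}_{jm} = -(2/H) H_i (h^k_j h_{mn} - h^k_m h_{jn}). -/
import Mathlib


theorem stmt15 {A : Type*} [CommRing A] [Algebra ℝ A] (D : Derivation ℝ A A)
    {ι : Type*} (h hup : ι → ι → A)
    (H HI Hinv : A) (hHinv : H * Hinv = 1)
    (hDH : D H = HI)
    (hDh : ∀ m n, D (h m n) = -(2 * Hinv * HI) * h m n)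
    (hDhup : ∀ k m, D (hup k m) = 0)
    (S : ι → ι → ι → ι → A)
    (hS : ∀ n k j m, S n k j m = (1 - H ^ 2) * (hup k j * h m n - hup k m * h j n)) :
    ∀ n k j m, D (S n k j m) =
      -(2 * Hinv * HI) * (hup k j * h m n - hup k m * h j n) := by
  intro n k j m
  rw [hS]
  simp only [Derivation.leibniz, map_sub, Derivation.map_one_eq_zero, pow_two, smul_eq_mul, hDH, hDh, hDhup]
  ring_nf
  linear_combination (2 * H * HI * hup k j * h m n - 2 * H * HI * hup k m * h j n) * hHinv
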